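/- Fix G ≥ 2, ρ ∈ [0,1], ε ≥ 0, δ ∈ (0,1). Let q*_1,...,q*_G ∈ [0,1], let Y_1,...,Y_G be independent with Y_i ~ Bernoulli(q*_i), and let q_1,...,q_G satisfy |q_i − q*_i| ≤ ε. Define μ_{-j} = (1/(G-1))∑_{i≠j} q_i, μ*_{-j} = (1/(G-1))∑_{i≠j} q*_i, let ĵ be a (deterministic, since the q_i are deterministic) minimizer of |μ_{-j} − ρ|, and let p̂ = (1/(G-1))∑_{i≠ĵ} Y_i. Then with probability at least 1 − δ, |p̂ − ρ| ≤ min_j |μ*_{-j} − ρ| + 2ε + sqrt(log(2/δ)/(2(G−1))). -/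

import Mathlib

open MeasureTheory ProbabilityTheory Real Finset

lemma hoeff_bernoulli_log (p : ℝ) (hp0 : 0 ≤ p) (hp1 : p ≤ 1) (u : ℝ) :
    Real.log (1 - p + p * Real.exp u) ≤ u ^ 2 / 8 + p * u := by
  set A : ℝ → ℝ := fun u => 1 - p + p * Real.exp u with hA
  have hApos : ∀ u, 0 < A u := by
    intro u
    rcases eq_or_lt_of_le hp0 with h | h
    · simp [hA, ← h]
    · have := exp_pos u
      have : 0 < p * Real.exp u := mul_pos h (exp_pos u)
      simp only [hA]; linarith
  set F : ℝ → ℝ := fun u => u ^ 2 / 8 + p * u - Real.log (A u) with hF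
  set F' : ℝ → ℝ := fun u => u / 4 + p - p * Real.exp u / A u with hF'
  set F'' : ℝ → ℝ := fun u => 1 / 4 - (p * Real.exp u * A u - p * Real.exp u * (p * Real.exp u)) / (A u) ^ 2 with hF''
  have hdA : ∀ u, HasDerivAt A (p * Real.exp u) u := by
    intro u
    exact ((Real.hasDerivAt_exp u).const_mul p).const_add (1 - p)
  have hdF : ∀ u, HasDerivAt F (F' u) u := by
    intro u
    have h1 : HasDerivAt (fun u : ℝ => u ^ 2 / 8 + p * u) (u / 4 + p) u := by
      have := ((hasDerivAt_pow 2 u).div_const 8).add ((hasDerivAt_id u).const_mul p)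
      exact this.congr_deriv (by norm_num; ring)
    have h2 : HasDerivAt (fun u => Real.log (A u)) (p * Real.exp u / A u) u :=
      (hdA u).log (hApos u).ne'
    exact h1.sub h2
  have hdF' : ∀ u, HasDerivAt F' (F'' u) u := by
    intro u
    have h1 : HasDerivAt (fun u : ℝ => u / 4 + p) (1 / 4) u := by
      simpa using ((hasDerivAt_id u).div_const 4).add_const p
    have h2 : HasDerivAt (fun u => p * Real.exp u / A u)
        ((p * Real.exp u * A u - p * Real.exp u * (p * Real.exp u)) / (A u) ^ 2) u := by
      have := ((Real.hasDerivAt_exp u).const_mul p).div (hdA u) (hApos u).ne'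
      exact this
    exact h1.sub h2
  have hF''nonneg : ∀ u, 0 ≤ F'' u := by
    intro u
    have hA2 : 0 < (A u) ^ 2 := pow_pos (hApos u) 2
    rw [hF'', sub_nonneg, div_le_iff₀ hA2]
    have hAu : A u = 1 - p + p * Real.exp u := rfl
    nlinarith [sq_nonneg (1 - p - p * Real.exp u), mul_nonneg hp0 (exp_pos u).le, sq_nonneg (A u)]
  have hF'mono : Monotone F' :=
    monotone_of_deriv_nonneg (fun u => (hdF' u).differentiableAt) (by
      intro u
      rw [(hdF' u).deriv]
      exact hF''nonneg u)
  have hF'0 : F' 0 = 0 := by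
    simp [hF', hA]
  have hFdiff : Differentiable ℝ F := fun u => (hdF u).differentiableAt
  have hF0 : F 0 = 0 := by simp [hF, hA]
  have key : 0 ≤ F u := by
    rcases le_or_gt 0 u with h | h
    · have : MonotoneOn F (Set.Ici 0) := by
        apply monotoneOn_of_deriv_nonneg (convex_Ici 0) hFdiff.continuous.continuousOn
          (fun x _ => (hFdiff x).differentiableWithinAt)
        intro x hx
        rw [(hdF x).deriv]
        have hx0 : (0:ℝ) ≤ x := le_of_lt (by simpa using hx)
        have := hF'mono hx0
        rwa [hF'0] at this
      have := this (Set.self_mem_Ici) (Set.mem_Ici.mpr h) h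
      rwa [hF0] at this
    · have : AntitoneOn F (Set.Iic 0) := by
        apply antitoneOn_of_deriv_nonpos (convex_Iic 0) hFdiff.continuous.continuousOn
          (fun x _ => (hFdiff x).differentiableWithinAt)
        intro x hx
        rw [(hdF x).deriv]
        have hx0 : x ≤ (0:ℝ) := le_of_lt (by simpa using hx)
        have := hF'mono hx0
        rwa [hF'0] at this
      have := this (Set.mem_Iic.mpr h.le) (Set.self_mem_Iic) h.le
      rwa [hF0] at this
  have : Real.log (A u) ≤ u ^ 2 / 8 + p * u := by
    have := key; simp only [hF] at this; linarith
  exact this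

lemma hoeff_bernoulli (p : ℝ) (hp0 : 0 ≤ p) (hp1 : p ≤ 1) (u : ℝ) :
    (1 - p) * Real.exp (-(p * u)) + p * Real.exp ((1 - p) * u) ≤ Real.exp (u ^ 2 / 8) := by
  have hApos : 0 < 1 - p + p * Real.exp u := by
    rcases eq_or_lt_of_le hp0 with h | h
    · simp [← h]
    · have : 0 < p * Real.exp u := mul_pos h (exp_pos u)
      linarith
  have h := hoeff_bernoulli_log p hp0 hp1 u
  have h2 : 1 - p + p * Real.exp u ≤ Real.exp (u ^ 2 / 8 + p * u) :=
    (Real.log_le_iff_le_exp hApos).mp h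
  have h3 : Real.exp (-(p * u)) * (1 - p + p * Real.exp u)
      ≤ Real.exp (-(p * u)) * Real.exp (u ^ 2 / 8 + p * u) := by
    exact mul_le_mul_of_nonneg_left h2 (exp_pos _).le
  calc (1 - p) * Real.exp (-(p * u)) + p * Real.exp ((1 - p) * u)
      = Real.exp (-(p * u)) * (1 - p + p * Real.exp u) := by
        rw [show (1 - p) * u = u + -(p * u) by ring, Real.exp_add]; ring
    _ ≤ Real.exp (-(p * u)) * Real.exp (u ^ 2 / 8 + p * u) := h3
    _ = Real.exp (u ^ 2 / 8) := by rw [← Real.exp_add]; ring_nf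

lemma mgf_bernoulli_shift {Ω : Type*} [MeasurableSpace Ω] (μ : Measure Ω)
    [IsProbabilityMeasure μ] (X : Ω → ℝ) (hX : Measurable X)
    (h01 : ∀ ω, X ω = 0 ∨ X ω = 1) (p : ℝ) (hp : μ[X] = p) (t : ℝ) :
    mgf (fun ω => X ω - p) μ t = (1 - p) * Real.exp (-(p * t)) + p * Real.exp ((1 - p) * t) := by
  have hXint : Integrable X μ := by
    refine Integrable.mono' (integrable_const 1) hX.aestronglyMeasurable ?_
    filter_upwards with ω
    rcases h01 ω with h | h <;> simp [h]
  have hpt : ∀ ω, Real.exp (t * (X ω - p))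
      = Real.exp (-(p * t)) + (Real.exp ((1 - p) * t) - Real.exp (-(p * t))) * X ω := by
    intro ω
    rcases h01 ω with h | h <;> simp [h] <;> ring_nf
  rw [mgf]
  calc μ[fun ω => Real.exp (t * (X ω - p))]
      = μ[fun ω => Real.exp (-(p * t)) + (Real.exp ((1 - p) * t) - Real.exp (-(p * t))) * X ω] := by
        congr 1; funext ω; exact hpt ω
    _ = Real.exp (-(p * t)) + (Real.exp ((1 - p) * t) - Real.exp (-(p * t))) * p := by
        rw [integral_add (integrable_const _) (hXint.const_mul _), integral_const,
          integral_const_mul, hp]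
        simp
    _ = (1 - p) * Real.exp (-(p * t)) + p * Real.exp ((1 - p) * t) := by ring

lemma hoeff_tail {Ω : Type*} [MeasurableSpace Ω] (μ : Measure Ω) [IsProbabilityMeasure μ]
    {ι : Type*} (Y : ι → Ω → ℝ) (hmeas : ∀ i, Measurable (Y i))
    (hind : iIndepFun Y μ)
    (h01 : ∀ i ω, Y i ω = 0 ∨ Y i ω = 1)
    (p : ι → ℝ) (hp0 : ∀ i, 0 ≤ p i) (hp1 : ∀ i, p i ≤ 1)
    (hmean : ∀ i, μ[Y i] = p i)
    (s : Finset ι) (a : ℝ) (ha : 0 ≤ a) :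
    (μ {ω | (s.card : ℝ) * a ≤ ∑ i ∈ s, (Y i ω - p i)}).toReal
      ≤ Real.exp (-(2 * (s.card : ℝ) * a ^ 2))
    ∧ (μ {ω | ∑ i ∈ s, (Y i ω - p i) ≤ -((s.card : ℝ) * a)}).toReal
      ≤ Real.exp (-(2 * (s.card : ℝ) * a ^ 2)) := by
  classical
  set X : ι → Ω → ℝ := fun i ω => Y i ω - p i with hX
  have hXmeas : ∀ i, Measurable (X i) := fun i => (hmeas i).sub measurable_const
  have hXind : iIndepFun X μ := by
    refine hind.comp (fun i x => x - p i) (fun i => measurable_id.sub measurable_const)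
  have hXbd : ∀ i ω, |X i ω| ≤ 1 := by
    intro i ω
    rcases h01 i ω with h | h <;>
      · simp only [hX, h]
        rw [abs_le]; constructor <;> nlinarith [hp0 i, hp1 i]
  have hmgf_le : ∀ i t, mgf (X i) μ t ≤ Real.exp (t ^ 2 / 8) := by
    intro i t
    have := mgf_bernoulli_shift μ (Y i) (hmeas i) (h01 i) (p i) (hmean i) t
    have h2 := hoeff_bernoulli (p i) (hp0 i) (hp1 i) t
    calc mgf (X i) μ t = (1 - p i) * Real.exp (-(p i * t)) + p i * Real.exp ((1 - p i) * t) := this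
      _ ≤ Real.exp (t ^ 2 / 8) := h2
  have hint : ∀ (t : ℝ) i, Integrable (fun ω => Real.exp (t * X i ω)) μ := by
    intro t i
    refine Integrable.mono' (integrable_const (Real.exp |t|))
      (((hXmeas i).const_mul t).exp.aestronglyMeasurable) ?_
    filter_upwards with ω
    rw [Real.norm_eq_abs, abs_of_pos (exp_pos _), Real.exp_le_exp]
    calc t * X i ω ≤ |t * X i ω| := le_abs_self _
      _ = |t| * |X i ω| := abs_mul _ _
      _ ≤ |t| * 1 := mul_le_mul_of_nonneg_left (hXbd i ω) (abs_nonneg t)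
      _ = |t| := mul_one _
  have hSint : ∀ t : ℝ, Integrable (fun ω => Real.exp (t * (∑ i ∈ s, X i) ω)) μ :=
    fun t => hXind.integrable_exp_mul_sum hXmeas (fun i _ => hint t i)
  have hmgfS : ∀ t : ℝ, mgf (∑ i ∈ s, X i) μ t ≤ Real.exp ((s.card : ℝ) * t ^ 2 / 8) := by
    intro t
    rw [hXind.mgf_sum hXmeas]
    calc ∏ i ∈ s, mgf (X i) μ t ≤ ∏ i ∈ s, Real.exp (t ^ 2 / 8) :=
        Finset.prod_le_prod (fun i _ => mgf_nonneg) (fun i _ => hmgf_le i t)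
      _ = Real.exp ((s.card : ℝ) * t ^ 2 / 8) := by
        rw [Finset.prod_const, ← Real.exp_nat_mul]; ring_nf
  have hSapp : ∀ ω, (∑ i ∈ s, X i) ω = ∑ i ∈ s, (Y i ω - p i) := by
    intro ω; simp [hX]
  constructor
  · -- upper tail, t = 4a
    have h := measure_ge_le_exp_mul_mgf (X := ∑ i ∈ s, X i) (μ := μ)
      ((s.card : ℝ) * a) (t := 4 * a) (by linarith) (hSint _)
    have hb : Real.exp (-(4 * a) * ((s.card : ℝ) * a)) * mgf (∑ i ∈ s, X i) μ (4 * a)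
        ≤ Real.exp (-(2 * (s.card : ℝ) * a ^ 2)) := by
      calc Real.exp (-(4 * a) * ((s.card : ℝ) * a)) * mgf (∑ i ∈ s, X i) μ (4 * a)
          ≤ Real.exp (-(4 * a) * ((s.card : ℝ) * a)) * Real.exp ((s.card : ℝ) * (4 * a) ^ 2 / 8) := by
            gcongr
            · exact hmgfS _
        _ = Real.exp (-(2 * (s.card : ℝ) * a ^ 2)) := by rw [← Real.exp_add]; ring_nf
    simp only [hSapp] at h
    exact h.trans hb
  · -- lower tail, t = -(4a)
    have h := measure_le_le_exp_mul_mgf (X := ∑ i ∈ s, X i) (μ := μ)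
      (-((s.card : ℝ) * a)) (t := -(4 * a)) (by linarith) (hSint _)
    have hb : Real.exp (-(-(4 * a)) * (-((s.card : ℝ) * a))) * mgf (∑ i ∈ s, X i) μ (-(4 * a))
        ≤ Real.exp (-(2 * (s.card : ℝ) * a ^ 2)) := by
      calc Real.exp (-(-(4 * a)) * (-((s.card : ℝ) * a))) * mgf (∑ i ∈ s, X i) μ (-(4 * a))
          ≤ Real.exp (-(-(4 * a)) * (-((s.card : ℝ) * a))) * Real.exp ((s.card : ℝ) * (-(4 * a)) ^ 2 / 8) := by
            gcongr
            · exact hmgfS _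
        _ = Real.exp (-(2 * (s.card : ℝ) * a ^ 2)) := by rw [← Real.exp_add]; ring_nf
    simp only [hSapp] at h
    exact h.trans hb

theorem high_probability_closeness_to_target
    (G : ℕ) (hG : 2 ≤ G) (ρ : ℝ) (hρ : ρ ∈ Set.Icc (0:ℝ) 1)
    (ε : ℝ) (hε : 0 ≤ ε) (δ : ℝ) (hδ : δ ∈ Set.Ioo (0:ℝ) 1)
    {Ω : Type*} [MeasurableSpace Ω] (μ : Measure Ω) [IsProbabilityMeasure μ]
    (qstar : Fin G → ℝ) (hqstar : ∀ i, qstar i ∈ Set.Icc (0:ℝ) 1)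
    (Y : Fin G → Ω → ℝ) (hmeas : ∀ i, Measurable (Y i))
    (hind : iIndepFun Y μ)
    (h01 : ∀ i ω, Y i ω = 0 ∨ Y i ω = 1)
    (hmean : ∀ i, μ[Y i] = qstar i)
    (q : Fin G → ℝ) (hqe : ∀ i, |q i - qstar i| ≤ ε)
    (μm μsm : Fin G → ℝ)
    (hμm : ∀ j, μm j = (∑ i ∈ Finset.univ.erase j, q i) / ((G : ℝ) - 1))
    (hμsm : ∀ j, μsm j = (∑ i ∈ Finset.univ.erase j, qstar i) / ((G : ℝ) - 1))
    (jhat : Fin G) (hjhat : ∀ j, |μm jhat - ρ| ≤ |μm j - ρ|) :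
    ENNReal.ofReal (1 - δ) ≤
      μ {ω | |(∑ i ∈ Finset.univ.erase jhat, Y i ω) / ((G : ℝ) - 1) - ρ|
        ≤ (⨅ j, |μsm j - ρ|) + 2 * ε
          + Real.sqrt (Real.log (2 / δ) / (2 * ((G : ℝ) - 1)))} := by
  classical
  obtain ⟨hδ0, hδ1⟩ := hδ
  set n : ℝ := (G : ℝ) - 1 with hn
  have hG1 : (1:ℕ) ≤ G := le_trans one_le_two hG
  have hnpos : 0 < n := by
    have : (2:ℝ) ≤ (G:ℝ) := by exact_mod_cast hG
    simp only [hn]; linarith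
  have hcard : ∀ j : Fin G, ((Finset.univ.erase j).card : ℝ) = n := by
    intro j
    rw [Finset.card_erase_of_mem (Finset.mem_univ j), Finset.card_univ, Fintype.card_fin]
    rw [Nat.cast_sub hG1]
    simp [hn]
  set a : ℝ := Real.sqrt (Real.log (2 / δ) / (2 * n)) with haa
  have ha : 0 ≤ a := Real.sqrt_nonneg _
  have hlog : 0 ≤ Real.log (2 / δ) := by
    apply Real.log_nonneg
    rw [le_div_iff₀ hδ0]; linarith
  have ha2 : a ^ 2 = Real.log (2 / δ) / (2 * n) := by
    rw [haa, Real.sq_sqrt (div_nonneg hlog (by positivity))]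
  have hexp : Real.exp (-(2 * n * a ^ 2)) = δ / 2 := by
    rw [ha2]
    have h1 : 2 * n * (Real.log (2 / δ) / (2 * n)) = Real.log (2 / δ) := by
      field_simp
    rw [h1, Real.exp_neg, Real.exp_log (by positivity)]
    rw [inv_div]
  set s : Finset (Fin G) := Finset.univ.erase jhat with hs
  -- Hoeffding tails
  obtain ⟨hup, hlo⟩ := hoeff_tail μ Y hmeas hind h01 qstar
    (fun i => (hqstar i).1) (fun i => (hqstar i).2) hmean s a ha
  rw [hcard jhat] at hup hlo
  rw [hexp] at hup hlo
  -- the good event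
  set S : Ω → ℝ := fun ω => ∑ i ∈ s, (Y i ω - qstar i) with hS
  have hSmeas : Measurable S := by
    apply Finset.measurable_sum
    intro i _
    exact (hmeas i).sub measurable_const
  set T : Set Ω := {ω | |S ω| ≤ n * a} with hT
  have hTmeas : MeasurableSet T := by
    apply measurableSet_le (hSmeas.abs) measurable_const
  -- complement bound
  have hcompl : μ Tᶜ ≤ ENNReal.ofReal δ := by
    have hsub : Tᶜ ⊆ {ω | n * a ≤ S ω} ∪ {ω | S ω ≤ -(n * a)} := by
      intro ω hω
      have hω' : n * a < |S ω| := by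
        simpa only [hT, Set.mem_compl_iff, Set.mem_setOf_eq, not_le] using hω
      rcases lt_abs.mp hω' with h | h
      · left; exact le_of_lt h
      · right; simp only [Set.mem_setOf_eq]; linarith
    calc μ Tᶜ ≤ μ ({ω | n * a ≤ S ω} ∪ {ω | S ω ≤ -(n * a)}) := measure_mono hsub
      _ ≤ μ {ω | n * a ≤ S ω} + μ {ω | S ω ≤ -(n * a)} := measure_union_le _ _
      _ ≤ ENNReal.ofReal (δ / 2) + ENNReal.ofReal (δ / 2) := by
          gcongr
          · rw [← ENNReal.ofReal_toReal (measure_ne_top μ _)]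
            exact ENNReal.ofReal_le_ofReal hup
          · rw [← ENNReal.ofReal_toReal (measure_ne_top μ _)]
            exact ENNReal.ofReal_le_ofReal hlo
      _ = ENNReal.ofReal δ := by
          rw [← ENNReal.ofReal_add (by linarith) (by linarith)]
          norm_num
  have hTlb : ENNReal.ofReal (1 - δ) ≤ μ T := by
    have e1 : ENNReal.ofReal (1 - δ) ≤ 1 - ENNReal.ofReal δ := by
      rw [← ENNReal.ofReal_one, ← ENNReal.ofReal_sub _ (le_of_lt hδ0)]
    have e2 : (1 : ENNReal) - ENNReal.ofReal δ ≤ 1 - μ Tᶜ := tsub_le_tsub_left hcompl 1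
    have e3 : μ T = 1 - μ Tᶜ := by
      rw [prob_compl_eq_one_sub hTmeas, ENNReal.sub_sub_cancel ENNReal.one_ne_top prob_le_one]
    exact e1.trans (e2.trans_eq e3.symm)
  -- deterministic bound
  have hdiff : ∀ j : Fin G, |μm j - μsm j| ≤ ε := by
    intro j
    rw [hμm j, hμsm j, div_sub_div_same, ← Finset.sum_sub_distrib]
    rw [abs_div, abs_of_pos hnpos]
    rw [div_le_iff₀ hnpos]
    calc |∑ i ∈ Finset.univ.erase j, (q i - qstar i)|
        ≤ ∑ i ∈ Finset.univ.erase j, |q i - qstar i| := Finset.abs_sum_le_sum_abs _ _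
      _ ≤ ∑ i ∈ Finset.univ.erase j, ε := Finset.sum_le_sum (fun i _ => hqe i)
      _ = ((Finset.univ.erase j).card : ℝ) * ε := by rw [Finset.sum_const, nsmul_eq_mul]
      _ = ε * n := by rw [hcard j]; ring
  have tri : ∀ x y : ℝ, |x - ρ| ≤ |y - ρ| + |x - y| := by
    intro x y
    have h := abs_add_le (y - ρ) (x - y)
    have e : (y - ρ) + (x - y) = x - ρ := by ring
    rw [e] at h; exact h
  have hkey : ∀ j : Fin G, |μsm jhat - ρ| ≤ |μsm j - ρ| + 2 * ε := by
    intro j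
    have h1 : |μsm jhat - ρ| ≤ |μm jhat - ρ| + |μsm jhat - μm jhat| := tri _ _
    have h1' : |μsm jhat - μm jhat| = |μm jhat - μsm jhat| := abs_sub_comm _ _
    have h2 : |μm j - ρ| ≤ |μsm j - ρ| + |μm j - μsm j| := tri _ _
    have := hjhat j
    have := hdiff jhat
    have := hdiff j
    linarith
  have hnonempty : Nonempty (Fin G) := ⟨⟨0, by omega⟩⟩
  have hdet : |μsm jhat - ρ| ≤ (⨅ j, |μsm j - ρ|) + 2 * ε := by
    obtain ⟨j0, hj0⟩ := Finite.exists_min (fun j : Fin G => |μsm j - ρ|)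
    have h1 : |μsm j0 - ρ| ≤ ⨅ j, |μsm j - ρ| := le_ciInf hj0
    have := hkey j0
    linarith
  -- event inclusion
  refine le_trans hTlb (measure_mono ?_)
  intro ω hω
  simp only [hT, Set.mem_setOf_eq] at hω ⊢
  have hQ : μsm jhat = (∑ i ∈ s, qstar i) / n := by rw [hμsm jhat]
  have hsplit : (∑ i ∈ s, Y i ω) / n - ρ = S ω / n + (μsm jhat - ρ) := by
    rw [hQ]
    have hSω : S ω = (∑ i ∈ s, Y i ω) - ∑ i ∈ s, qstar i := by
      simp only [hS, Finset.sum_sub_distrib]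
    rw [hSω]
    field_simp
    ring
  calc |(∑ i ∈ s, Y i ω) / n - ρ| = |S ω / n + (μsm jhat - ρ)| := by rw [hsplit]
    _ ≤ |S ω / n| + |μsm jhat - ρ| := abs_add_le _ _
    _ ≤ a + ((⨅ j, |μsm j - ρ|) + 2 * ε) := by
        have h1 : |S ω / n| ≤ a := by
          rw [abs_div, abs_of_pos hnpos, div_le_iff₀ hnpos]
          linarith [hω]
        linarith [hdet]
    _ = (⨅ j, |μsm j - ρ|) + 2 * ε + a := by ring
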